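/- arXiv:2001.09112 — 4 statements merged into one kernel-verified Lean document; each statement's English description precedes it below -/
import Mathlib

section
/- For every integer n ≥ 1, let c_m denote the (finite) number of words of length m in the language P_n = (D_n·{e})*, and let G_n(z) = Σ_{m≥0} c_m z^m ∈ ℚ[[z]] be its generating function. Then G_n(z)·(1 − z·F_n(z)) = 1 in ℚ[[z]], where F_n(z) = Σ_{k≥0} n^k · catalan(k) · z^{2k} is the generating function of D_n. (This is the paper's identity H_{P_n}(q) = 1/(1 − q·H_{D_n}(q)).) -/
/-- The Dyck language over `n` kinds of parentheses. -/
inductive Dyck (n : ℕ) : List (Fin n × Bool) → Prop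
  | nil : Dyck n []
  | append {u v : List (Fin n × Bool)} : Dyck n u → Dyck n v → Dyck n (u ++ v)
  | wrap {w : List (Fin n × Bool)} (i : Fin n) :
      Dyck n w → Dyck n ((i, true) :: (w ++ [(i, false)]))

/-- The language `Dₙ·{e}` over the alphabet `Σₙ ∪ {e}` (the letter `e` is `none`). -/
def DyckE (n : ℕ) : Language (Option (Fin n × Bool)) :=
  {w | ∃ u, Dyck n u ∧ w = u.map some ++ [none]}

/-- The language `Pₙ = (Dₙ·{e})*`. -/
def P (n : ℕ) : Language (Option (Fin n × Bool)) := KStar.kstar (DyckE n)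

/-- The generating function `Gₙ(z) = Σ_m c_m z^m` of `Pₙ`, where `c_m` is the number
of words of length `m` in `Pₙ`. -/
noncomputable def PGF (n : ℕ) : PowerSeries ℚ :=
  PowerSeries.mk fun m => (Nat.card {w : List (Option (Fin n × Bool)) | w ∈ P n ∧ w.length = m} : ℚ)

/-- The generating function `Fₙ(z) = Σ_{k≥0} nᵏ · catalan k · z^{2k}` of the Dyck language. -/
noncomputable def dyckGF (n : ℕ) : PowerSeries ℚ :=
  PowerSeries.mk fun m => if m % 2 = 0 then (n : ℚ) ^ (m / 2) * catalan (m / 2) else 0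

/-! ### Auxiliary material -/

section Aux

variable {n : ℕ}

/-- Balance of a word: number of opening minus closing letters. -/
def bal {n : ℕ} (w : List (Fin n × Bool)) : ℤ :=
  (w.map fun x => if x.2 then (1 : ℤ) else -1).sum

@[simp] lemma bal_nil : bal ([] : List (Fin n × Bool)) = 0 := rfl

@[simp] lemma bal_cons (x : Fin n × Bool) (w : List (Fin n × Bool)) :
    bal (x :: w) = (if x.2 then (1 : ℤ) else -1) + bal w := by simp [bal]

@[simp] lemma bal_append (u v : List (Fin n × Bool)) : bal (u ++ v) = bal u + bal v := by
  simp [bal]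

lemma Dyck.bal_eq_zero {w : List (Fin n × Bool)} (h : Dyck n w) : bal w = 0 := by
  induction h with
  | nil => rfl
  | append _ _ ih1 ih2 => simp [ih1, ih2]
  | wrap i _ ih => simp [ih]

lemma prefix_append_cases {α : Type*} {p u v : List α} (h : p <+: u ++ v) :
    p <+: u ∨ ∃ q, q <+: v ∧ p = u ++ q := by
  rcases le_or_gt p.length u.length with hl | hl
  · exact Or.inl (List.prefix_of_prefix_length_le h (u.prefix_append v) hl)
  · have hu : u <+: p := List.prefix_of_prefix_length_le (u.prefix_append v) h hl.le
    obtain ⟨q, rfl⟩ := hu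
    exact Or.inr ⟨q, (List.prefix_append_right_inj u).mp h, rfl⟩

lemma Dyck.bal_prefix_nonneg {w : List (Fin n × Bool)} (h : Dyck n w) :
    ∀ p, p <+: w → 0 ≤ bal p := by
  induction h with
  | nil =>
    intro p hp
    simp [List.prefix_nil.mp hp]
  | @append u v hu hv ih1 ih2 =>
    intro p hp
    rcases prefix_append_cases hp with h1 | ⟨q, hq, rfl⟩
    · exact ih1 p h1
    · have h2 := ih2 q hq
      have h0 := hu.bal_eq_zero
      rw [bal_append, h0, zero_add]
      exact h2
  | @wrap w i hw ih =>
    intro p hp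
    rcases List.prefix_cons_iff.mp hp with rfl | ⟨q, rfl, hq⟩
    · simp
    · rcases prefix_append_cases hq with h1 | ⟨r, hr, rfl⟩
      · have h2 := ih q h1
        simp only [bal_cons, if_true]
        omega
      · have hr' : r = [] ∨ r = [(i, false)] := by
          rcases List.prefix_cons_iff.mp hr with rfl | ⟨t, rfl, ht⟩
          · exact Or.inl rfl
          · simp [List.prefix_nil.mp ht]
        have hbw : bal w = 0 := hw.bal_eq_zero
        rcases hr' with rfl | rfl <;> simp [hbw]

lemma Dyck.exists_decomp {w : List (Fin n × Bool)} (h : Dyck n w) (hw : w ≠ []) :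
    ∃ (i : Fin n) (u v : List (Fin n × Bool)), Dyck n u ∧ Dyck n v ∧
      w = (i, true) :: (u ++ (i, false) :: v) := by
  induction h with
  | nil => exact absurd rfl hw
  | @append u v hu hv ih1 ih2 =>
    rcases eq_or_ne u [] with rfl | hne
    · simp only [List.nil_append] at hw ⊢
      exact ih2 hw
    · obtain ⟨i, u1, v1, h1, h2, rfl⟩ := ih1 hne
      exact ⟨i, u1, v1 ++ v, h1, h2.append hv, by simp⟩
  | @wrap w i hw' ih =>
    exact ⟨i, w, [], hw', Dyck.nil, by simp⟩

lemma length_le_of_eq {u u' v v' : List (Fin n × Bool)} {i : Fin n}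
    (hu : Dyck n u) (hu' : Dyck n u')
    (h : u ++ (i, false) :: v = u' ++ (i, false) :: v') : u'.length ≤ u.length := by
  by_contra hlt
  push_neg at hlt
  have hpre : u ++ [(i, false)] <+: u' := by
    have h1 : u ++ [(i, false)] <+: u' ++ (i, false) :: v' := by
      rw [← h, show u ++ (i, false) :: v = (u ++ [(i, false)]) ++ v by simp]
      exact List.prefix_append _ _
    apply List.prefix_of_prefix_length_le h1 (u'.prefix_append _)
    simp only [List.length_append, List.length_cons, List.length_singleton, List.length_nil]
    omega
  have hnn := hu'.bal_prefix_nonneg _ hpre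
  rw [bal_append, hu.bal_eq_zero] at hnn
  simp at hnn

lemma decomp_unique {i i' : Fin n} {u u' v v' : List (Fin n × Bool)}
    (hu : Dyck n u) (hu' : Dyck n u')
    (h : (i, true) :: (u ++ (i, false) :: v) = (i', true) :: (u' ++ (i', false) :: v')) :
    i = i' ∧ u = u' ∧ v = v' := by
  obtain ⟨h1, h2⟩ := List.cons.injEq _ _ _ _ ▸ h
  have hii : i = i' := (Prod.mk.injEq _ _ _ _ ▸ h1).1
  subst hii
  have hlen : u.length = u'.length :=
    le_antisymm (length_le_of_eq hu' hu h2.symm) (length_le_of_eq hu hu' h2)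
  obtain ⟨e1, e2⟩ := List.append_inj h2 hlen
  exact ⟨rfl, e1, (List.cons.injEq _ _ _ _ ▸ e2).2⟩

lemma Dyck.even_length {w : List (Fin n × Bool)} (h : Dyck n w) : Even w.length := by
  induction h with
  | nil => simp
  | append _ _ ih1 ih2 => simpa [List.length_append] using ih1.add ih2
  | wrap i _ ih =>
    obtain ⟨k, hk⟩ := ih
    exact ⟨k + 1, by simp [List.length_append]; omega⟩

/-! ### Counting -/

/-- Number of Dyck words of length `m`. -/
noncomputable def dC (n m : ℕ) : ℕ :=
  Nat.card {w : List (Fin n × Bool) | Dyck n w ∧ w.length = m}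

/-- Number of words of `P n` of length `m`. -/
noncomputable def pC (n m : ℕ) : ℕ :=
  Nat.card {w : List (Option (Fin n × Bool)) | w ∈ P n ∧ w.length = m}

lemma finD (n m : ℕ) : {w : List (Fin n × Bool) | Dyck n w ∧ w.length = m}.Finite :=
  (List.finite_length_eq _ m).subset fun _ hw => hw.2

lemma finP (n m : ℕ) : {w : List (Option (Fin n × Bool)) | w ∈ P n ∧ w.length = m}.Finite :=
  (List.finite_length_eq _ m).subset fun _ hw => hw.2

lemma dC_zero : dC n 0 = 1 := by
  have h : {w : List (Fin n × Bool) | Dyck n w ∧ w.length = 0} = {[]} := by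
    ext w
    constructor
    · rintro ⟨_, h2⟩
      exact List.length_eq_zero_iff.mp h2
    · rintro rfl
      exact ⟨Dyck.nil, rfl⟩
  rw [dC, Nat.card_coe_set_eq, h, Set.ncard_singleton]

lemma dC_odd (k : ℕ) : dC n (2 * k + 1) = 0 := by
  have h : {w : List (Fin n × Bool) | Dyck n w ∧ w.length = 2 * k + 1} = ∅ := by
    ext w
    simp only [Set.mem_setOf_eq, Set.mem_empty_iff_false, iff_false, not_and]
    intro hw hl
    obtain ⟨j, hj⟩ := hw.even_length
    omega
  rw [dC, Nat.card_coe_set_eq, h, Set.ncard_empty]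

lemma Nat.card_sigma'' {ι : Type*} [Fintype ι] (β : ι → Type*) [∀ i, Finite (β i)] :
    Nat.card (Σ i, β i) = ∑ i, Nat.card (β i) := by
  haveI : ∀ i, Fintype (β i) := fun i => Fintype.ofFinite _
  simp [Nat.card_eq_fintype_card, Fintype.card_sigma]

lemma dC_rec (n m : ℕ) :
    dC n (m + 2) = n * ∑ j ∈ Finset.range (m + 1), dC n j * dC n (m - j) := by
  classical
  haveI hfd : ∀ k, Finite {w : List (Fin n × Bool) | Dyck n w ∧ w.length = k} :=
    fun k => (finD n k).to_subtype
  set T := Fin n × ((j : Fin (m + 1)) ×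
      ({u : List (Fin n × Bool) | Dyck n u ∧ u.length = (j : ℕ)} ×
       {v : List (Fin n × Bool) | Dyck n v ∧ v.length = m - (j : ℕ)})) with hT
  let Φ : T → {w : List (Fin n × Bool) | Dyck n w ∧ w.length = m + 2} := fun x =>
    ⟨(x.1, true) :: (x.2.2.1.1 ++ (x.1, false) :: x.2.2.2.1), by
      obtain ⟨i, j, ⟨u, hu, hul⟩, ⟨v, hv, hvl⟩⟩ := x
      refine ⟨?_, ?_⟩
      · rw [show (i, true) :: (u ++ (i, false) :: v) =
          ((i, true) :: (u ++ [(i, false)])) ++ v by simp]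
        exact (Dyck.wrap i hu).append hv
      · have hj : (j : ℕ) ≤ m := Nat.lt_succ_iff.mp j.isLt
        simp only [List.length_cons, List.length_append]
        omega⟩
  have hbij : Function.Bijective Φ := by
    constructor
    · rintro ⟨i, j, ⟨u, hu, hul⟩, ⟨v, hv, hvl⟩⟩ ⟨i', j', ⟨u', hu', hul'⟩, ⟨v', hv', hvl'⟩⟩ hxy
      simp only [Φ, Subtype.mk.injEq] at hxy
      obtain ⟨hii, huu, hvv⟩ := decomp_unique hu hu' hxy
      subst hii
      have hjj : j = j' := by
        apply Fin.ext
        rw [← hul, ← hul', huu]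
      subst hjj
      subst huu
      subst hvv
      rfl
    · rintro ⟨w, hw, hwl⟩
      have hne : w ≠ [] := by
        intro h; rw [h] at hwl; simp at hwl
      obtain ⟨i, u, v, hu, hv, rfl⟩ := hw.exists_decomp hne
      have hul : u.length ≤ m := by
        simp only [List.length_cons, List.length_append] at hwl
        omega
      have hvl : v.length = m - u.length := by
        simp only [List.length_cons, List.length_append] at hwl
        omega
      exact ⟨⟨i, ⟨u.length, Nat.lt_succ_of_le hul⟩, ⟨u, hu, rfl⟩, ⟨v, hv, hvl⟩⟩, rfl⟩
  have hcard := Nat.card_congr (Equiv.ofBijective Φ hbij)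
  rw [hT] at hcard
  rw [dC, ← hcard, Nat.card_prod, Nat.card_eq_fintype_card (α := Fin n), Fintype.card_fin,
    Nat.card_sigma'']
  congr 1
  rw [← Fin.sum_univ_eq_sum_range (fun j => dC n j * dC n (m - j))]
  apply Finset.sum_congr rfl
  intro j _
  rw [Nat.card_prod]
  rfl

lemma sum_range_even (k : ℕ) (f : ℕ → ℕ) (hf : ∀ j, f (2 * j + 1) = 0) :
    ∑ j ∈ Finset.range (2 * k + 1), f j = ∑ i ∈ Finset.range (k + 1), f (2 * i) := by
  induction k with
  | zero => simp
  | succ k ih =>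
    rw [show 2 * (k + 1) + 1 = (2 * k + 1) + 1 + 1 by ring, Finset.sum_range_succ,
      Finset.sum_range_succ, ih, Finset.sum_range_succ, hf k, add_zero,
      show 2 * k + 1 + 1 = 2 * (k + 1) by ring, Finset.sum_range_succ, Finset.sum_range_succ]

lemma dC_even (n : ℕ) : ∀ k, dC n (2 * k) = n ^ k * catalan k := by
  intro k
  induction k using Nat.strong_induction_on with
  | _ k IH =>
    match k with
    | 0 => simpa using dC_zero
    | k + 1 =>
      rw [show 2 * (k + 1) = 2 * k + 2 by ring, dC_rec,
        sum_range_even k (fun j => dC n j * dC n (2 * k - j))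
          (fun j => by simp [dC_odd])]
      have hterm : ∀ i ∈ Finset.range (k + 1),
          dC n (2 * i) * dC n (2 * k - 2 * i) = n ^ k * (catalan i * catalan (k - i)) := by
        intro i hi
        rw [Finset.mem_range] at hi
        have hik : i ≤ k := Nat.lt_succ_iff.mp hi
        rw [show 2 * k - 2 * i = 2 * (k - i) by omega,
          IH i (by omega), IH (k - i) (by omega)]
        rw [show n ^ i * catalan i * (n ^ (k - i) * catalan (k - i)) =
          (n ^ i * n ^ (k - i)) * (catalan i * catalan (k - i)) by ring,
          ← pow_add, show i + (k - i) = k by omega]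
      rw [Finset.sum_congr rfl hterm, ← Finset.mul_sum]
      rw [show (∑ i ∈ Finset.range (k + 1), catalan i * catalan (k - i)) = catalan (k + 1) by
        rw [catalan_succ, Fin.sum_univ_eq_sum_range (fun i => catalan i * catalan (k - i))]]
      ring

lemma dC_eq (n m : ℕ) :
    (dC n m : ℚ) = if m % 2 = 0 then (n : ℚ) ^ (m / 2) * catalan (m / 2) else 0 := by
  rcases Nat.even_or_odd m with ⟨k, hk⟩ | ⟨k, hk⟩
  · subst hk
    rw [if_pos (by omega), show (k + k) / 2 = k by omega, show k + k = 2 * k by ring, dC_even]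
    push_cast
    ring
  · subst hk
    rw [if_neg (by omega), dC_odd]
    simp

/-! ### Decomposition of `P n` -/

lemma mem_P_iff {w : List (Option (Fin n × Bool))} :
    w ∈ P n ↔ w = [] ∨ ∃ u v, Dyck n u ∧ v ∈ P n ∧ w = u.map some ++ none :: v := by
  constructor
  · intro hw
    obtain ⟨L, rfl, hL⟩ := Language.mem_kstar.mp hw
    match L with
    | [] => exact Or.inl rfl
    | h :: t =>
      obtain ⟨u, hu, rfl⟩ := hL h List.mem_cons_self
      refine Or.inr ⟨u, t.flatten, hu, Language.join_mem_kstar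
        (fun y hy => hL y (List.mem_cons_of_mem _ hy)), ?_⟩
      simp
  · rintro (rfl | ⟨u, v, hu, hv, rfl⟩)
    · exact Language.nil_mem_kstar _
    · obtain ⟨L, rfl, hL⟩ := Language.mem_kstar.mp hv
      refine Language.mem_kstar.mpr ⟨(u.map some ++ [none]) :: L, by simp, ?_⟩
      rintro y hy
      rcases List.mem_cons.mp hy with rfl | hy
      · exact ⟨u, hu, rfl⟩
      · exact hL y hy

lemma split_unique : ∀ {u u' : List (Fin n × Bool)} {v v' : List (Option (Fin n × Bool))},
    u.map some ++ none :: v = u'.map some ++ none :: v' → u = u' ∧ v = v' := by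
  intro u
  induction u with
  | nil =>
    intro u' v v' h
    match u' with
    | [] => simpa using h
    | a :: t => simp at h
  | cons a t ih =>
    intro u' v v' h
    match u' with
    | [] => simp at h
    | a' :: t' =>
      simp only [List.map_cons, List.cons_append, List.cons.injEq, Option.some.injEq] at h
      obtain ⟨rfl, h2⟩ := h
      obtain ⟨rfl, rfl⟩ := ih h2
      exact ⟨rfl, rfl⟩

lemma pC_zero : pC n 0 = 1 := by
  have h : {w : List (Option (Fin n × Bool)) | w ∈ P n ∧ w.length = 0} = {[]} := by
    ext w
    constructor
    · rintro ⟨_, h2⟩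
      exact List.length_eq_zero_iff.mp h2
    · rintro rfl
      exact ⟨Language.nil_mem_kstar _, rfl⟩
  rw [pC, Nat.card_coe_set_eq, h, Set.ncard_singleton]

lemma pC_rec (n m : ℕ) :
    pC n (m + 1) = ∑ j ∈ Finset.range (m + 1), dC n j * pC n (m - j) := by
  classical
  haveI hfd : ∀ k, Finite {w : List (Fin n × Bool) | Dyck n w ∧ w.length = k} :=
    fun k => (finD n k).to_subtype
  haveI hfp : ∀ k, Finite {w : List (Option (Fin n × Bool)) | w ∈ P n ∧ w.length = k} :=
    fun k => (finP n k).to_subtype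
  set T := (j : Fin (m + 1)) ×
      ({u : List (Fin n × Bool) | Dyck n u ∧ u.length = (j : ℕ)} ×
       {v : List (Option (Fin n × Bool)) | v ∈ P n ∧ v.length = m - (j : ℕ)}) with hT
  let Φ : T → {w : List (Option (Fin n × Bool)) | w ∈ P n ∧ w.length = m + 1} := fun x =>
    ⟨x.2.1.1.map some ++ none :: x.2.2.1, by
      obtain ⟨j, ⟨u, hu, hul⟩, ⟨v, hv, hvl⟩⟩ := x
      refine ⟨mem_P_iff.mpr (Or.inr ⟨u, v, hu, hv, rfl⟩), ?_⟩
      have hj : (j : ℕ) ≤ m := Nat.lt_succ_iff.mp j.isLt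
      simp only [List.length_append, List.length_cons, List.length_map]
      omega⟩
  have hbij : Function.Bijective Φ := by
    constructor
    · rintro ⟨j, ⟨u, hu, hul⟩, ⟨v, hv, hvl⟩⟩ ⟨j', ⟨u', hu', hul'⟩, ⟨v', hv', hvl'⟩⟩ hxy
      simp only [Φ, Subtype.mk.injEq] at hxy
      obtain ⟨huu, hvv⟩ := split_unique hxy
      have hjj : j = j' := by
        apply Fin.ext
        rw [← hul, ← hul', huu]
      subst hjj
      subst huu
      subst hvv
      rfl
    · rintro ⟨w, hw, hwl⟩
      rcases mem_P_iff.mp hw with rfl | ⟨u, v, hu, hv, rfl⟩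
      · simp at hwl
      · have hul : u.length ≤ m := by
          simp only [List.length_append, List.length_cons, List.length_map] at hwl
          omega
        have hvl : v.length = m - u.length := by
          simp only [List.length_append, List.length_cons, List.length_map] at hwl
          omega
        exact ⟨⟨⟨u.length, Nat.lt_succ_of_le hul⟩, ⟨u, hu, rfl⟩, ⟨v, hv, hvl⟩⟩, rfl⟩
  have hcard := Nat.card_congr (Equiv.ofBijective Φ hbij)
  rw [hT] at hcard
  rw [pC, ← hcard, Nat.card_sigma'']
  rw [← Fin.sum_univ_eq_sum_range (fun j => dC n j * pC n (m - j))]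
  apply Finset.sum_congr rfl
  intro j _
  rw [Nat.card_prod]
  rfl

lemma coeff_dyckGF (n m : ℕ) : PowerSeries.coeff m (dyckGF n) = (dC n m : ℚ) := by
  rw [dyckGF, PowerSeries.coeff_mk, dC_eq]

lemma coeff_PGF (n m : ℕ) : PowerSeries.coeff m (PGF n) = (pC n m : ℚ) := by
  rw [PGF, PowerSeries.coeff_mk]
  rfl


end Aux


/-- `Pₙ` has finitely many words of each length, and `Gₙ(z)·(1 − z·Fₙ(z)) = 1`. -/
theorem stmt_2 (n : ℕ) (hn : 1 ≤ n) :
    (∀ m : ℕ, {w : List (Option (Fin n × Bool)) | w ∈ P n ∧ w.length = m}.Finite) ∧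
    PGF n * (1 - PowerSeries.X * dyckGF n) = 1 := by
  refine ⟨finP n, ?_⟩
  ext m
  rw [mul_sub, mul_one, map_sub, PowerSeries.coeff_one,
    show PGF n * (PowerSeries.X * dyckGF n) = PowerSeries.X * (dyckGF n * PGF n) by ring]
  cases m with
  | zero =>
    rw [PowerSeries.coeff_zero_X_mul, coeff_PGF, pC_zero]
    norm_num
  | succ m =>
    rw [PowerSeries.coeff_succ_X_mul, PowerSeries.coeff_mul,
      Finset.Nat.sum_antidiagonal_eq_sum_range_succ_mk, if_neg (by omega), coeff_PGF,
      pC_rec n m]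
    simp only [coeff_dyckGF, coeff_PGF]
    push_cast
    ring
end

section
/- Let k be a field, n, m ≥ 1 integers, and φ: Σ_n* → T* a monoid homomorphism, where T = {t_1,…,t_m}. In the free associative algebra F = k⟨X⟩ on the set X of variables {a_i, b_i, a_i^j, b_i^j (1 ≤ i, j ≤ n), x, e, y, t_1, …, t_m}, for every w ∈ P_n and every v ∈ D_n, the element α(w·v)·x·y·e − x·w·y·φ(v)·e lies in the two-sided ideal of F generated by the relations (i)–(iii). -/
/-- The set `X` of variables: `aᵢ`, `bᵢ`, `aᵢʲ`, `bᵢʲ` (`1 ≤ i, j ≤ n`),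
`x`, `e`, `y`, and `t₁, …, t_m`. -/
inductive Var (n m : ℕ) : Type
  | a (i : Fin n)
  | b (i : Fin n)
  | A (i j : Fin n)   -- the variable `aᵢʲ`
  | B (i j : Fin n)   -- the variable `bᵢʲ`
  | x
  | e
  | y
  | t (k : Fin m)

/-- The monomial of `F = k⟨X⟩` corresponding to a word over `X`. -/
noncomputable def mono (K : Type*) [Field K] {n m : ℕ} (w : List (Var n m)) :
    FreeAlgebra K (Var n m) :=
  (w.map (FreeAlgebra.ι K)).prod

/-- Extension of `φ : Σₙ → T*` to a monoid homomorphism `Σₙ* → T*`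
(a letter of `Σₙ` is a pair `(i, s)`, with `s = true` for `aᵢ`, `s = false` for `bᵢ`). -/
def phiWord {n m : ℕ} (φ : Fin n × Bool → List (Fin m)) (v : List (Fin n × Bool)) :
    List (Fin m) :=
  (v.map φ).flatten

/-- The inclusion of `Σₙ ∪ {e}` into `X`. -/
def embGamma {n m : ℕ} : Option (Fin n × Bool) → Var n m
  | none => Var.e
  | some (i, true) => Var.a i
  | some (i, false) => Var.b i

/-- The homomorphism `α : (Σₙ ∪ {e})* → X*` with `α(aᵢ) = aᵢⁱ`, `α(bᵢ) = b₁¹`, `α(e) = b₁¹`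
(on the level of letters). -/
def alphaLetter {n m : ℕ} (hn : 0 < n) : Option (Fin n × Bool) → Var n m
  | none => Var.B ⟨0, hn⟩ ⟨0, hn⟩
  | some (i, true) => Var.A i i
  | some (_, false) => Var.B ⟨0, hn⟩ ⟨0, hn⟩

/-- The set of the relations (i)–(iii). -/
def rels (K : Type*) [Field K] (n m : ℕ) (hn : 0 < n)
    (φ : Fin n × Bool → List (Fin m)) : Set (FreeAlgebra K (Var n m)) :=
  { f | -- (i) aᵢⁱ x − x aᵢⁱ  and  b₁¹ x − x e
        (∃ i : Fin n, f = mono K [Var.A i i, Var.x] - mono K [Var.x, Var.A i i]) ∨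
        f = mono K [Var.B ⟨0, hn⟩ ⟨0, hn⟩, Var.x] - mono K [Var.x, Var.e] ∨
        -- (ii) aᵢʲ a_l − aᵢ a_lʲ, aᵢʲ b_l − aᵢ b_lʲ, bᵢʲ a_l − bᵢ a_lʲ, bᵢʲ b_l − bᵢ b_lʲ,
        --      aᵢʲ e − aᵢ b_j, bᵢʲ e − bᵢ b_j
        (∃ i j l : Fin n, f = mono K [Var.A i j, Var.a l] - mono K [Var.a i, Var.A l j]) ∨
        (∃ i j l : Fin n, f = mono K [Var.A i j, Var.b l] - mono K [Var.a i, Var.B l j]) ∨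
        (∃ i j l : Fin n, f = mono K [Var.B i j, Var.a l] - mono K [Var.b i, Var.A l j]) ∨
        (∃ i j l : Fin n, f = mono K [Var.B i j, Var.b l] - mono K [Var.b i, Var.B l j]) ∨
        (∃ i j : Fin n, f = mono K [Var.A i j, Var.e] - mono K [Var.a i, Var.b j]) ∨
        (∃ i j : Fin n, f = mono K [Var.B i j, Var.e] - mono K [Var.b i, Var.b j]) ∨
        -- (iii) aᵢ y − y φ(aᵢ), bᵢ y − y φ(bᵢ), aᵢʲ y, bᵢʲ y
        (∃ i : Fin n, f = mono K [Var.a i, Var.y]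
          - mono K (Var.y :: (φ (i, true)).map Var.t)) ∨
        (∃ i : Fin n, f = mono K [Var.b i, Var.y]
          - mono K (Var.y :: (φ (i, false)).map Var.t)) ∨
        (∃ i j : Fin n, f = mono K [Var.A i j, Var.y]) ∨
        (∃ i j : Fin n, f = mono K [Var.B i j, Var.y]) }

section Aux

variable (K : Type*) [Field K] {n m : ℕ} (hn : 0 < n) (φ : Fin n × Bool → List (Fin m))

/-- `β` from the proof: image of a letter after `x` has been pushed through its `α`-image. -/
def betaO {n m : ℕ} : Option (Fin n × Bool) → Var n m
  | some (i, true) => Var.A i i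
  | _ => Var.e

def betaS {n m : ℕ} (c : Fin n × Bool) : Var n m := betaO (some c)

def embS {n m : ℕ} (c : Fin n × Bool) : Var n m := embGamma (some c)

def sup {n m : ℕ} (j : Fin n) : Fin n × Bool → Var n m
  | (i, true) => Var.A i j
  | (i, false) => Var.B i j

@[simp] lemma map_betaO_some {n m : ℕ} (d : List (Fin n × Bool)) :
    (d.map some).map (betaO (m := m)) = d.map betaS := by
  rw [List.map_map]; rfl

@[simp] lemma map_embGamma_some {n m : ℕ} (d : List (Fin n × Bool)) :
    (d.map some).map (embGamma (m := m)) = d.map embS := by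
  rw [List.map_map]; rfl

@[simp] lemma betaO_comp_some {n m : ℕ} :
    (betaO (n := n) (m := m)) ∘ some = betaS := rfl

@[simp] lemma embGamma_comp_some {n m : ℕ} :
    (embGamma (n := n) (m := m)) ∘ some = embS := rfl

@[simp] lemma betaS_true {n m : ℕ} (i : Fin n) : (betaS (i, true) : Var n m) = Var.A i i := rfl

@[simp] lemma betaS_false {n m : ℕ} (i : Fin n) : (betaS (i, false) : Var n m) = Var.e := rfl

@[simp] lemma betaO_none {n m : ℕ} : (betaO none : Var n m) = Var.e := rfl

@[simp] lemma embGamma_none {n m : ℕ} : (embGamma none : Var n m) = Var.e := rfl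

@[simp] lemma mono_nil : mono K ([] : List (Var n m)) = 1 := rfl

@[simp] lemma mono_cons (c : Var n m) (w : List (Var n m)) :
    mono K (c :: w) = FreeAlgebra.ι K c * mono K w := by
  simp [mono]

lemma mono_append (u v : List (Var n m)) :
    mono K (u ++ v) = mono K u * mono K v := by
  simp [mono]

/-- Congruence modulo the ideal generated by the relations. -/
def E (p q : FreeAlgebra K (Var n m)) : Prop :=
  p - q ∈ TwoSidedIdeal.span (rels K n m hn φ)

variable {K hn φ}

lemma E_refl (p : FreeAlgebra K (Var n m)) : E K hn φ p p := by
  simp only [E, sub_self]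
  exact (TwoSidedIdeal.span _).zero_mem

lemma E_trans {p q r : FreeAlgebra K (Var n m)}
    (h1 : E K hn φ p q) (h2 : E K hn φ q r) : E K hn φ p r := by
  have := (TwoSidedIdeal.span (rels K n m hn φ)).add_mem h1 h2
  simpa [E] using this

lemma E_of_mem {p q : FreeAlgebra K (Var n m)}
    (h : p - q ∈ rels K n m hn φ) : E K hn φ p q :=
  TwoSidedIdeal.subset_span h

lemma E_mul {p q : FreeAlgebra K (Var n m)} (h : E K hn φ p q)
    (r t : FreeAlgebra K (Var n m)) : E K hn φ (r * p * t) (r * q * t) := by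
  have h1 : r * (p - q) ∈ TwoSidedIdeal.span (rels K n m hn φ) :=
    (TwoSidedIdeal.span _).mul_mem_left r _ h
  have h2 : r * (p - q) * t ∈ TwoSidedIdeal.span (rels K n m hn φ) :=
    (TwoSidedIdeal.span _).mul_mem_right _ t h1
  simpa [E, mul_sub, sub_mul] using h2

lemma E_congr (pre post : List (Var n m)) {p q : List (Var n m)}
    (h : E K hn φ (mono K p) (mono K q)) :
    E K hn φ (mono K (pre ++ p ++ post)) (mono K (pre ++ q ++ post)) := by
  simpa [mono_append, mul_assoc] using E_mul h (mono K pre) (mono K post)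

lemma E_congrL (pre : List (Var n m)) {p q : List (Var n m)}
    (h : E K hn φ (mono K p) (mono K q)) :
    E K hn φ (mono K (pre ++ p)) (mono K (pre ++ q)) := by
  simpa using E_congr pre [] h

/-- Pushing `x` from right to left through the `α`-image of a word. -/
lemma push_x (u : List (Option (Fin n × Bool))) (s : List (Var n m)) :
    E K hn φ (mono K (u.map (alphaLetter hn) ++ Var.x :: s))
      (mono K (Var.x :: (u.map betaO ++ s))) := by
  induction u generalizing s with
  | nil => exact E_refl _
  | cons c u ih =>
    have h1 : E K hn φ (mono K [alphaLetter hn c, Var.x]) (mono K [Var.x, betaO c]) := by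
      match c with
      | some (i, true) => exact E_of_mem (Or.inl ⟨i, rfl⟩)
      | some (i, false) => exact E_of_mem (Or.inr (Or.inl rfl))
      | none => exact E_of_mem (Or.inr (Or.inl rfl))
    have h2 := E_congr [] (u.map (betaO (m := m)) ++ s) h1
    have h3 := E_congrL [Var.x] (ih s)
    --   → (by h1) x :: β c :: (map β u ++ s)
    have h4 := E_congrL [alphaLetter hn c] (ih s)
    refine E_trans (by simpa using h4) ?_
    simpa using h2

/-- Pushing a superscripted letter through decoded base letters until the matching `e`. -/
lemma push_sup (c : Fin n × Bool) (j : Fin n) (p : List (Fin n × Bool))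
    (s : List (Var n m)) :
    E K hn φ (mono K (sup j c :: (p.map embS ++ Var.e :: s)))
      (mono K (embS c :: (p.map embS ++ Var.b j :: s))) := by
  induction p generalizing c with
  | nil =>
    have h : E K hn φ (mono K [sup j c, Var.e]) (mono K [embS c, Var.b j]) := by
      match c with
      | (i, true) =>
        exact E_of_mem (Or.inr (Or.inr (Or.inr (Or.inr (Or.inr (Or.inr
          (Or.inl ⟨i, j, rfl⟩)))))))
      | (i, false) =>
        exact E_of_mem (Or.inr (Or.inr (Or.inr (Or.inr (Or.inr (Or.inr (Or.inr
          (Or.inl ⟨i, j, rfl⟩))))))))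
    simpa using E_congr [] s h
  | cons d p' ih =>
    have h1 : E K hn φ (mono K [sup j c, embS d]) (mono K [embS c, sup j d]) := by
      match c, d with
      | (i, true), (l, true) =>
        exact E_of_mem (Or.inr (Or.inr (Or.inl ⟨i, j, l, rfl⟩)))
      | (i, true), (l, false) =>
        exact E_of_mem (Or.inr (Or.inr (Or.inr (Or.inl ⟨i, j, l, rfl⟩))))
      | (i, false), (l, true) =>
        exact E_of_mem (Or.inr (Or.inr (Or.inr (Or.inr (Or.inl ⟨i, j, l, rfl⟩)))))
      | (i, false), (l, false) =>
        exact E_of_mem (Or.inr (Or.inr (Or.inr (Or.inr (Or.inr (Or.inl ⟨i, j, l, rfl⟩))))))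
    have h2 := E_congr [] (p'.map (embS (m := m)) ++ Var.e :: s) h1
    have h3 := E_congrL [embS c] (ih d)
    refine E_trans (by simpa using h2) ?_
    simpa using h3

/-- Decoding the `β`-image of a Dyck word back to base letters. -/
lemma decode {v : List (Fin n × Bool)} (hv : Dyck n v) (s : List (Var n m)) :
    E K hn φ (mono K (v.map betaS ++ s)) (mono K (v.map embS ++ s)) := by
  induction hv generalizing s with
  | nil => exact E_refl _
  | append hu hv ihu ihv =>
    rename_i u v
    have h1 := E_congrL (u.map (betaS (m := m))) (ihv s)
    have h2 := ihu (v.map embS ++ s)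
    exact E_trans (by simpa using h1) (by simpa using h2)
  | wrap i hu ihu =>
    rename_i u
    have h1 := E_congrL [Var.A i i] (ihu (Var.e :: s))
    have h2 := push_sup (K := K) (hn := hn) (φ := φ) (i, true) i u s
    refine E_trans (by simpa using h1) ?_
    simpa [sup, embS, embGamma] using h2

/-- Decoding the `β`-image of a word in `Pₙ`. -/
lemma decode_blocks (L : List (List (Option (Fin n × Bool)))) (s : List (Var n m)) :
    (∀ u ∈ L, u ∈ DyckE n) →
    E K hn φ (mono K (L.flatten.map betaO ++ s)) (mono K (L.flatten.map embGamma ++ s)) := by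
  induction L generalizing s with
  | nil => intro _; exact E_refl _
  | cons u L ih =>
    intro hL
    obtain ⟨d, hd, rfl⟩ := hL u (by simp)
    have h1 := decode (K := K) (hn := hn) (φ := φ) hd
      (s := Var.e :: (L.flatten.map betaO ++ s))
    have h2 := E_congrL (K := K) (hn := hn) (φ := φ) (d.map embS ++ [Var.e])
      (ih s (fun u hu => hL u (by simp [hu])))
    refine E_trans (by simpa using h1) ?_
    simpa using h2

lemma decodeP {w : List (Option (Fin n × Bool))} (hw : w ∈ P n) (s : List (Var n m)) :
    E K hn φ (mono K (w.map betaO ++ s)) (mono K (w.map embGamma ++ s)) := by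
  have hw' : w ∈ KStar.kstar (DyckE n) := hw
  obtain ⟨L, rfl, hL⟩ := Language.mem_kstar.mp hw'
  exact decode_blocks L s hL

/-- Pushing `y` from right to left through a decoded word, applying `φ`. -/
lemma push_y (v : List (Fin n × Bool)) (s : List (Var n m)) :
    E K hn φ (mono K (v.map embS ++ Var.y :: s))
      (mono K (Var.y :: ((phiWord φ v).map Var.t ++ s))) := by
  induction v generalizing s with
  | nil => exact E_refl _
  | cons c v ih =>
    have h1 : E K hn φ (mono K [embS c, Var.y])
        (mono K (Var.y :: (φ c).map Var.t)) := by
      match c with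
      | (i, true) =>
        exact E_of_mem (Or.inr (Or.inr (Or.inr (Or.inr (Or.inr (Or.inr (Or.inr (Or.inr
          (Or.inl ⟨i, rfl⟩)))))))))
      | (i, false) =>
        exact E_of_mem (Or.inr (Or.inr (Or.inr (Or.inr (Or.inr (Or.inr (Or.inr (Or.inr
          (Or.inr (Or.inl ⟨i, rfl⟩))))))))))
    have h2 := E_congrL [embS c] (ih s)
    have h3 := E_congr [] ((phiWord φ v).map Var.t ++ s) h1
    refine E_trans (by simpa using h2) ?_
    refine E_trans (by simpa using h3) ?_
    have : (Var.y :: ((φ c).map Var.t : List (Var n m))) ++ ((phiWord φ v).map Var.t ++ s)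
        = Var.y :: ((phiWord φ (c :: v)).map Var.t ++ s) := by
      simp [phiWord]
    rw [← this]
    exact E_refl _

end Aux

/-- For every `w ∈ Pₙ` and `v ∈ Dₙ`, the element `α(w·v)·x·y·e − x·w·y·φ(v)·e` lies in
the two-sided ideal of `F = k⟨X⟩` generated by the relations (i)–(iii). -/
theorem stmt_5 (K : Type*) [Field K] (n m : ℕ) (hn : 1 ≤ n) (hm : 1 ≤ m)
    (φ : Fin n × Bool → List (Fin m)) :
    ∀ w : List (Option (Fin n × Bool)), w ∈ P n →
      ∀ v : List (Fin n × Bool), Dyck n v →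
        mono K (((w ++ v.map some).map (alphaLetter hn)) ++ [Var.x, Var.y, Var.e])
          - mono K ([Var.x] ++ w.map embGamma ++ [Var.y]
              ++ (phiWord φ v).map Var.t ++ [Var.e])
          ∈ TwoSidedIdeal.span (rels K n m hn φ) := by
  intro w hw v hv
  show E K hn φ _ _
  have h1 := push_x (K := K) (hn := hn) (φ := φ) (w ++ v.map some) [Var.y, Var.e]
  have h2 := E_congrL (K := K) (hn := hn) (φ := φ) [Var.x]
    (decodeP hw (v.map betaS ++ [Var.y, Var.e]))
  have h3 := E_congrL (K := K) (hn := hn) (φ := φ) (Var.x :: w.map embGamma)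
    (decode hv [Var.y, Var.e])
  have h4 := E_congrL (K := K) (hn := hn) (φ := φ) (Var.x :: w.map embGamma)
    (push_y v [Var.e])
  refine E_trans (by simpa using h1) ?_
  refine E_trans (by simpa using h2) ?_
  refine E_trans (by simpa using h3) ?_
  simpa using h4
end

section
/- For every integer n ≥ 1, the power series F_n(z) = Σ_{k≥0} n^k · catalan(k) · z^{2k} ∈ ℚ[[z]] is not a rational function: there do not exist polynomials p, q ∈ ℚ[z] with q ≠ 0 such that q·F_n = p holds in ℚ[[z]]. (Equivalently, the generating function of the Dyck language D_n, i.e. the series expansion of (1−√(1−4nz²))/(2nz²), is non-rational.) -/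
open Polynomial PowerSeries Finset in
/-- Key convolution identity: the even-indexed coefficients convolve like Catalan numbers. -/
lemma dyck_conv (n j : ℕ) :
    (PowerSeries.coeff (2 * j)) (dyckGF n ^ 2) = (n : ℚ) ^ j * catalan (j + 1) := by
  rw [sq, PowerSeries.coeff_mul]
  have hcoeff : ∀ m, (PowerSeries.coeff m) (dyckGF n) =
      if m % 2 = 0 then (n : ℚ) ^ (m / 2) * catalan (m / 2) else 0 := fun m => by
    simp [dyckGF]
  have h1 : ∑ p ∈ antidiagonal (2 * j),
        (PowerSeries.coeff p.1) (dyckGF n) * (PowerSeries.coeff p.2) (dyckGF n)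
      = ∑ p ∈ (antidiagonal (2 * j)).filter (fun p => p.1 % 2 = 0),
        (PowerSeries.coeff p.1) (dyckGF n) * (PowerSeries.coeff p.2) (dyckGF n) := by
    rw [Finset.sum_filter_of_ne]
    intro p hp hne
    by_contra hmod
    exact hne (by rw [hcoeff p.1, if_neg hmod, zero_mul])
  rw [h1]
  rw [Finset.sum_nbij' (i := fun p => (p.1 / 2, p.2 / 2)) (j := fun p => (2 * p.1, 2 * p.2))
    (t := antidiagonal j)
    (g := fun p => ((n : ℚ) ^ p.1 * catalan p.1) * ((n : ℚ) ^ p.2 * catalan p.2))]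
  · have : ∀ p ∈ antidiagonal j, ((n : ℚ) ^ p.1 * catalan p.1) * ((n : ℚ) ^ p.2 * catalan p.2)
        = (n : ℚ) ^ j * (catalan p.1 * catalan p.2) := by
      rintro ⟨a, b⟩ hab
      rw [Finset.HasAntidiagonal.mem_antidiagonal] at hab
      subst hab
      push_cast
      ring
    rw [Finset.sum_congr rfl this, ← Finset.mul_sum, catalan_succ' j]
    push_cast
    ring
  · rintro ⟨a, b⟩ hab
    simp only [Finset.mem_filter, Finset.HasAntidiagonal.mem_antidiagonal] at hab ⊢
    omega
  · rintro ⟨a, b⟩ hab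
    simp only [Finset.mem_filter, Finset.HasAntidiagonal.mem_antidiagonal] at hab ⊢
    omega
  · rintro ⟨a, b⟩ hab
    simp only [Finset.mem_filter, Finset.HasAntidiagonal.mem_antidiagonal] at hab
    simp only [Prod.mk.injEq]
    omega
  · rintro ⟨a, b⟩ hab
    simp only [Finset.HasAntidiagonal.mem_antidiagonal] at hab
    simp only [Prod.mk.injEq]
    omega
  · rintro ⟨a, b⟩ hab
    simp only [Finset.mem_filter, Finset.HasAntidiagonal.mem_antidiagonal] at hab
    rw [hcoeff, hcoeff, if_pos (by omega), if_pos (by omega)]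

open PowerSeries in
/-- The functional equation `F = 1 + n·X²·F²`. -/
lemma dyck_feq (n : ℕ) :
    dyckGF n = 1 + (n : ℚ) • ((X : PowerSeries ℚ) ^ 2 * dyckGF n ^ 2) := by
  ext m
  rw [map_add, map_smul]
  match m with
  | 0 =>
    have : (PowerSeries.coeff 0) ((X : PowerSeries ℚ) ^ 2 * dyckGF n ^ 2) = 0 := by
      rw [PowerSeries.coeff_X_pow_mul' (dyckGF n ^ 2) 2 0]
      simp
    rw [this, smul_zero, add_zero]
    simp [dyckGF, PowerSeries.coeff_one]
  | 1 =>
    have : (PowerSeries.coeff 1) ((X : PowerSeries ℚ) ^ 2 * dyckGF n ^ 2) = 0 := by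
      rw [PowerSeries.coeff_X_pow_mul' (dyckGF n ^ 2) 2 1]
      simp
    rw [this, smul_zero, add_zero]
    simp [dyckGF, PowerSeries.coeff_one]
  | (k + 2) =>
    rw [PowerSeries.coeff_X_pow_mul (dyckGF n ^ 2) 2 k]
    have h1 : (PowerSeries.coeff (k + 2)) (1 : PowerSeries ℚ) = 0 := by
      simp [PowerSeries.coeff_one]
    rw [h1, zero_add]
    rcases Nat.even_or_odd k with ⟨j, hj⟩ | ⟨l, hl⟩
    · have hk2 : k = 2 * j := by omega
      subst hk2
      rw [dyck_conv]
      have : (PowerSeries.coeff (2 * j + 2)) (dyckGF n)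
          = (n : ℚ) ^ (j + 1) * catalan (j + 1) := by
        simp only [dyckGF, PowerSeries.coeff_mk]
        rw [if_pos (by omega), show (2 * j + 2) / 2 = j + 1 by omega]
      rw [this, smul_eq_mul]
      ring
    · have hodd : (k + 2) % 2 = 1 := by omega
      have hlhs : (PowerSeries.coeff (k + 2)) (dyckGF n) = 0 := by
        simp only [dyckGF, PowerSeries.coeff_mk]
        rw [if_neg (by omega)]
      have hrhs : (PowerSeries.coeff k) (dyckGF n ^ 2) = 0 := by
        rw [sq, PowerSeries.coeff_mul]
        apply Finset.sum_eq_zero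
        rintro ⟨a, b⟩ hab
        rw [Finset.HasAntidiagonal.mem_antidiagonal] at hab
        have : a % 2 = 1 ∨ b % 2 = 1 := by omega
        simp only [dyckGF, PowerSeries.coeff_mk]
        rcases this with h | h
        · exact mul_eq_zero.2 (Or.inl (by rw [if_neg (by omega)]))
        · exact mul_eq_zero.2 (Or.inr (by rw [if_neg (by omega)]))
      rw [hlhs, hrhs, smul_zero]

open Polynomial in
/-- Descent: for squarefree `s` of positive degree, `s·q² = r²` has no solution with `q ≠ 0`. -/
lemma descent (s : ℚ[X]) (hs : Squarefree s) (hd : 0 < s.natDegree) :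
    ∀ q : ℚ[X], q ≠ 0 → ∀ r : ℚ[X], s * q ^ 2 ≠ r ^ 2 := by
  have hs0 : s ≠ 0 := hs.ne_zero
  have key : ∀ N : ℕ, ∀ q : ℚ[X], q.natDegree = N → q ≠ 0 → ∀ r : ℚ[X], s * q ^ 2 ≠ r ^ 2 := by
    intro N
    induction N using Nat.strong_induction_on with
    | _ N ih =>
      rintro q rfl hq r h
      have hsr : s ∣ r ^ 2 := ⟨q ^ 2, h.symm⟩
      obtain ⟨t, rfl⟩ := hs.isRadical 2 r hsr
      rw [mul_pow] at h
      have h2 : q ^ 2 = s * t ^ 2 := mul_left_cancel₀ hs0 (by linear_combination h)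
      have hsq : s ∣ q ^ 2 := ⟨t ^ 2, h2⟩
      obtain ⟨u, rfl⟩ := hs.isRadical 2 q hsq
      have hu : u ≠ 0 := by rintro rfl; simp at hq
      have h3 : s * u ^ 2 = t ^ 2 := mul_left_cancel₀ hs0 (by linear_combination h2)
      have hdeg : u.natDegree < (s * u).natDegree := by
        rw [Polynomial.natDegree_mul hs0 hu]
        omega
      exact ih u.natDegree hdeg u rfl hu t h3
  intro q hq r
  exact key q.natDegree q rfl hq r

/-- The power series `Fₙ` is not a rational function: there are no polynomials
`p, q ∈ ℚ[z]` with `q ≠ 0` and `q·Fₙ = p` in `ℚ[[z]]`. -/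
theorem stmt_7 (n : ℕ) (hn : 1 ≤ n) :
    ¬ ∃ (p q : Polynomial ℚ), q ≠ 0 ∧
      (q : PowerSeries ℚ) * dyckGF n = (p : PowerSeries ℚ) := by
  rintro ⟨p, q, hq, h⟩
  -- Derive the polynomial identity q·p = q² + n·X²·p²
  have feq := dyck_feq n
  have hps : ((q * p : Polynomial ℚ) : PowerSeries ℚ)
      = ((q ^ 2 + Polynomial.C (n : ℚ) * Polynomial.X ^ 2 * p ^ 2 : Polynomial ℚ)
          : PowerSeries ℚ) := by
    push_cast [Polynomial.coe_mul, Polynomial.coe_add, Polynomial.coe_pow, Polynomial.coe_X,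
      Polynomial.coe_C]
    calc (q : PowerSeries ℚ) * (p : PowerSeries ℚ)
        = (q : PowerSeries ℚ) * ((q : PowerSeries ℚ) * dyckGF n) := by rw [h]
      _ = (q : PowerSeries ℚ) ^ 2 * dyckGF n := by ring
      _ = (q : PowerSeries ℚ) ^ 2 * (1 + (n : ℚ) • ((PowerSeries.X : PowerSeries ℚ) ^ 2 * dyckGF n ^ 2))
          := by rw [← feq]
      _ = (q : PowerSeries ℚ) ^ 2
          + (n : ℚ) • ((PowerSeries.X : PowerSeries ℚ) ^ 2 * ((q : PowerSeries ℚ) * dyckGF n) ^ 2) := by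
            rw [mul_add, mul_one, mul_smul_comm]
            ring_nf
      _ = (q : PowerSeries ℚ) ^ 2
          + PowerSeries.C (n : ℚ) * (PowerSeries.X ^ 2 * (p : PowerSeries ℚ) ^ 2) := by
            rw [h, PowerSeries.smul_eq_C_mul]
      _ = (q : PowerSeries ℚ) ^ 2
          + PowerSeries.C (n : ℚ) * PowerSeries.X ^ 2 * (p : PowerSeries ℚ) ^ 2 := by ring
  have hpoly : q * p = q ^ 2 + Polynomial.C (n : ℚ) * Polynomial.X ^ 2 * p ^ 2 :=
    Polynomial.coe_inj.mp hps
  -- Complete the square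
  set s : Polynomial ℚ := 1 - Polynomial.C (4 * n : ℚ) * Polynomial.X ^ 2 with hs_def
  set r : Polynomial ℚ := 2 * Polynomial.C (n : ℚ) * Polynomial.X ^ 2 * p - q with hr_def
  have hsq : s * q ^ 2 = r ^ 2 := by
    rw [hs_def, hr_def]
    have hC4 : (Polynomial.C (4 * n : ℚ)) = 4 * Polynomial.C (n : ℚ) := by
      rw [show (4 * n : ℚ) = 4 * (n : ℚ) by ring, map_mul, map_ofNat]
    rw [hC4]
    linear_combination (4 * Polynomial.C (n : ℚ) * Polynomial.X ^ 2) * hpoly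
  -- s is squarefree of degree 2
  have hn0 : (4 * n : ℚ) ≠ 0 := by positivity
  have hsep : s.Separable := by
    refine ⟨1, Polynomial.C (-(1/2) : ℚ) * Polynomial.X, ?_⟩
    have hd : Polynomial.derivative s = -(Polynomial.C (8 * n : ℚ)) * Polynomial.X := by
      rw [hs_def]
      simp only [Polynomial.derivative_sub, Polynomial.derivative_one,
        Polynomial.derivative_C_mul, Polynomial.derivative_X_pow]
      have hC2 : Polynomial.C (4 * n : ℚ) * Polynomial.C (2 : ℚ) = Polynomial.C (8 * n : ℚ) := by
        rw [← map_mul]; congr 1; ring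
      push_cast
      linear_combination (-Polynomial.X) * hC2
    rw [hd, hs_def]
    have hCC : Polynomial.C (-(1/2) : ℚ) * Polynomial.C (8 * n : ℚ)
        = -Polynomial.C (4 * n : ℚ) := by
      rw [← map_mul, ← map_neg]; congr 1; ring
    linear_combination (-Polynomial.X ^ 2) * hCC
  have hsf : Squarefree s := hsep.squarefree
  have hdeg : 0 < s.natDegree := by
    have : s.natDegree = 2 := by
      rw [hs_def]
      compute_degree!
      all_goals omega
    omega
  exact descent s hsf hdeg q hq r hsq
end

section
/- Let φ: Σ_2* → {A, B}* be the monoid homomorphism determined by φ(a_1) = A, φ(b_1) = B, φ(a_2) = B, φ(b_2) = A. Then the image φ(D_2) of the Dyck language D_2 is exactly the language of all words over the two-letter alphabet {A, B} containing the same number of occurrences of A and of B: for every w ∈ {A,B}*, w ∈ φ(D_2) if and only if the number of A's in w equals the number of B's in w. -/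
/-- The letterwise description of `φ : Σ₂* → {A, B}*` (with `A = true`, `B = false`):
`φ(a₁) = A`, `φ(b₁) = B`, `φ(a₂) = B`, `φ(b₂) = A`. -/
def phiLetter : Fin 2 × Bool → List Bool
  | (⟨0, _⟩, true) => [true]    -- a₁ ↦ A
  | (⟨0, _⟩, false) => [false]  -- b₁ ↦ B
  | (⟨1, _⟩, true) => [false]   -- a₂ ↦ B
  | (⟨1, _⟩, false) => [true]   -- b₂ ↦ A

/-- The extension of `φ` to a monoid homomorphism `Σ₂* → {A, B}*`. -/
def phi (u : List (Fin 2 × Bool)) : List Bool := (u.map phiLetter).flatten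

def sL (p : Fin 2 × Bool) : Bool := xor p.2 (decide (p.1 = 1))

lemma phiLetter_eq (p : Fin 2 × Bool) : phiLetter p = [sL p] := by
  obtain ⟨i, b⟩ := p
  fin_cases i <;> cases b <;> rfl

lemma phi_eq_map (u : List (Fin 2 × Bool)) : phi u = u.map sL := by
  induction u with
  | nil => rfl
  | cons a t ih =>
      simp only [phi, List.map_cons, List.flatten_cons, phiLetter_eq] at *
      simp [ih]

lemma dyck_insert {n : ℕ} {u v : List (Fin n × Bool)} (hu : Dyck n u) (hv : Dyck n v) :
    ∀ x y, u = x ++ y → Dyck n (x ++ v ++ y) := by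
  induction hu with
  | nil =>
      intro x y h
      obtain ⟨hx, hy⟩ := List.append_eq_nil_iff.mp h.symm
      subst hx; subst hy; simpa using hv
  | append h1 h2 ih1 ih2 =>
      intro x y h
      rcases List.append_eq_append_iff.mp h.symm with ⟨a', ha1, ha2⟩ | ⟨c', hc1, hc2⟩
      · subst ha1; subst ha2
        have := Dyck.append (ih1 x a' rfl) h2
        simpa using this
      · subst hc1; subst hc2
        have := Dyck.append h1 (ih2 c' y rfl)
        simpa using this
  | @wrap w i hw ih =>
      intro x y h
      cases x with
      | nil =>
          simp only [List.nil_append] at h ⊢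
          exact Dyck.append hv (h ▸ Dyck.wrap i hw)
      | cons p x' =>
          rw [List.cons_append] at h
          obtain ⟨hp, hrest⟩ := List.cons.injEq .. ▸ h
          subst hp
          rcases List.append_eq_append_iff.mp hrest with ⟨a', ha1, ha2⟩ | ⟨c', hc1, hc2⟩
          · cases a' with
            | nil =>
                simp only [List.nil_append] at ha2
                subst ha2
                simp only [List.append_nil] at ha1
                have := Dyck.wrap i (ih x' [] (by simp [ha1]))
                simpa using this
            | cons e a'' =>
                obtain ⟨he, ha⟩ := List.cons.injEq .. ▸ ha2
                obtain ⟨ha'', hy⟩ := List.append_eq_nil_iff.mp ha.symm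
                subst hy; subst ha''; subst he
                simp only [List.append_nil] at ha1 ⊢
                have := Dyck.append (Dyck.wrap i hw) hv
                subst ha1
                simpa using this
          · subst hc1; subst hc2
            have := Dyck.wrap i (ih x' c' rfl)
            simpa using this

lemma exists_adj : ∀ (w : List Bool), true ∈ w → false ∈ w →
    ∃ x c y, w = x ++ c :: (!c) :: y := by
  intro w
  induction w with
  | nil => simp
  | cons a t ih =>
      intro ht hf
      cases t with
      | nil => cases a <;> simp_all
      | cons b t' =>
          by_cases hab : a = b
          · subst hab
            have h1 : true ∈ a :: t' := by
              rcases List.mem_cons.mp ht with h | h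
              · simp_all
              · exact h
            have h2 : false ∈ a :: t' := by
              rcases List.mem_cons.mp hf with h | h
              · simp_all
              · exact h
            obtain ⟨x, c, y, hxy⟩ := ih h1 h2
            exact ⟨a :: x, c, y, by simp [hxy]⟩
          · refine ⟨[], a, t', ?_⟩
            have : b = !a := by cases a <;> cases b <;> simp_all
            simp [this]

lemma count_true_phiLetter (p : Fin 2 × Bool) :
    (phiLetter p).count true + (phiLetter p).count false = 1 := by
  obtain ⟨i, b⟩ := p; fin_cases i <;> cases b <;> rfl

lemma dyck_balanced {u : List (Fin 2 × Bool)} (hu : Dyck 2 u) :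
    (phi u).count true = (phi u).count false := by
  induction hu with
  | nil => rfl
  | @append a b h1 h2 ih1 ih2 =>
      have : phi (a ++ b) = phi a ++ phi b := by simp [phi]
      rw [this, List.count_append, List.count_append, ih1, ih2]
  | @wrap w i hw ih =>
      have hrw : phi ((i, true) :: (w ++ [(i, false)]))
          = phiLetter (i, true) ++ phi w ++ phiLetter (i, false) := by
        simp [phi]
      rw [hrw]
      fin_cases i <;>
        simp [phiLetter, List.count_append, List.count_cons, ih] <;> omega

lemma balanced_in_image : ∀ (m : ℕ) (w : List Bool), w.length = m →
    w.count true = w.count false → ∃ u, Dyck 2 u ∧ w = phi u := by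
  intro m
  induction m using Nat.strong_induction_on with
  | _ m IH =>
    intro w hlen hbal
    rcases w.eq_nil_or_concat with rfl | hne
    · exact ⟨[], Dyck.nil, rfl⟩
    · have hw : w ≠ [] := by rcases hne with ⟨l, a, rfl⟩; simp
      have hmem : true ∈ w ∧ false ∈ w := by
        rcases List.exists_mem_of_ne_nil w hw with ⟨a, ha⟩
        have h1 : 0 < w.count a := List.count_pos_iff.mpr ha
        have h2 : 0 < w.count (!a) := by cases a <;> simp_all <;> omega
        have := List.count_pos_iff.mp h2
        cases a <;> simp_all
      obtain ⟨x, c, y, rfl⟩ := exists_adj w hmem.1 hmem.2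
      have hbal' : (x ++ y).count true = (x ++ y).count false := by
        simp only [List.count_append, List.count_cons] at hbal ⊢
        cases c <;> simp_all <;> omega
      have hlen' : (x ++ y).length < m := by
        simp only [List.length_append, List.length_cons] at hlen ⊢
        omega
      obtain ⟨u', hu', heq⟩ := IH _ hlen' (x ++ y) rfl hbal'
      set u₁ := u'.take x.length with hu1
      set u₂ := u'.drop x.length with hu2
      have hsplit : u' = u₁ ++ u₂ := (List.take_append_drop _ _).symm
      have hlenu : x.length ≤ u'.length := by
        have := congrArg List.length heq
        simp [phi_eq_map] at this
        omega
      have hx : x = List.map sL u₁ := by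
        rw [hu1, List.map_take, ← phi_eq_map, ← heq]
        exact (List.take_left (l₁ := x) (l₂ := y)).symm
      have hy : y = List.map sL u₂ := by
        rw [hu2, List.map_drop, ← phi_eq_map, ← heq]
        exact (List.drop_left (l₁ := x) (l₂ := y)).symm
      set d : Fin 2 := if c then 0 else 1 with hd
      have hpair : Dyck 2 [(d, true), (d, false)] := by
        have := Dyck.wrap (n := 2) d Dyck.nil
        simpa using this
      have hphipair : phi [(d, true), (d, false)] = [c, !c] := by
        cases c <;> rfl
      refine ⟨u₁ ++ [(d, true), (d, false)] ++ u₂, ?_, ?_⟩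
      · exact dyck_insert hu' hpair u₁ u₂ hsplit
      · simp only [phi_eq_map, List.map_append] at hphipair ⊢
        rw [← hx, ← hy, hphipair]
        simp

/-- The image `φ(D₂)` of the Dyck language `D₂` is exactly the language of all
words over `{A, B}` with the same number of `A`'s and `B`'s. -/
theorem stmt_11 :
    ∀ w : List Bool,
      (∃ u, Dyck 2 u ∧ w = phi u) ↔ w.count true = w.count false := by
  intro w
  constructor
  · rintro ⟨u, hu, rfl⟩
    exact dyck_balanced hu
  · intro h
    exact balanced_in_image w.length w rfl h
end
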